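/- For every n, the complete graph K_n is a 2-PCC graph; that is, K_n can be drawn as a simple topological graph in which for every pair of crossing edges there is a path of at most 2 crossing-free edges connecting an endpoint of one edge with an endpoint of the other. -/

import Mathlib

open Set

/-- A topological graph: a graph (no loops or parallel edges) drawn in the plane with
vertices as distinct points and edges as Jordan arcs connecting the corresponding points,
not containing any other vertex in their interior, and such that every two edges intersect
in finitely many points. -/
structure TopoGraph (V : Type) (E : Type) where
  /-- the position of each vertex in the plane -/
  pos : V → ℝ × ℝ
  pos_inj : Function.Injective pos
  /-- the two endpoints of each edge -/
  src : E → V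
  tgt : E → V
  /-- no loops -/
  src_ne_tgt : ∀ e, src e ≠ tgt e
  /-- no parallel edges -/
  no_parallel : ∀ e f : E, ({src e, tgt e} : Set V) = {src f, tgt f} → e = f
  /-- each edge is drawn as a (Jordan) arc -/
  arc : E → C(unitInterval, ℝ × ℝ)
  arc_src : ∀ e, arc e 0 = pos (src e)
  arc_tgt : ∀ e, arc e 1 = pos (tgt e)
  arc_inj : ∀ e, Function.Injective (arc e)
  /-- an edge does not contain any vertex as an interior point -/
  vertex_not_interior : ∀ (e : E) (v : V) (t : unitInterval), arc e t = pos v → t = 0 ∨ t = 1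
  /-- every pair of edges has a finite number of intersection points -/
  finite_intersections : ∀ e f : E, e ≠ f → (Set.range (arc e) ∩ Set.range (arc f)).Finite

namespace TopoGraph

variable {V E : Type} (G : TopoGraph V E)

/-- The endpoints of an edge. -/
def ends (e : E) : Set V := {G.src e, G.tgt e}

/-- Two edges cross if they intersect at a point which is not a common endpoint
(equivalently, not a vertex). -/
def Crosses (e f : E) : Prop :=
  e ≠ f ∧ ∃ p : ℝ × ℝ, p ∈ Set.range (G.arc e) ∧ p ∈ Set.range (G.arc f) ∧ ∀ v : V, p ≠ G.pos v

/-- An edge is crossing-free if no other edge crosses it. -/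
def CrossingFree (e : E) : Prop := ∀ f : E, ¬ G.Crosses e f

/-- Two edges are independent if they do not share a vertex. -/
def Independent (e f : E) : Prop := Disjoint (G.ends e) (G.ends f)

/-- Two (crossing) edges are planarly connected if there is a crossing-free edge
connecting an endpoint of one with an endpoint of the other. -/
def PlanarlyConnected (e f : E) : Prop :=
  ∃ g : E, G.CrossingFree g ∧
    ((G.src g ∈ G.ends e ∧ G.tgt g ∈ G.ends f) ∨ (G.src g ∈ G.ends f ∧ G.tgt g ∈ G.ends e))

/-- A topological graph is simple if every pair of its edges intersects at most once. -/
def Simple : Prop :=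
  ∀ e f : E, e ≠ f → (Set.range (G.arc e) ∩ Set.range (G.arc f)).Subsingleton

/-- A PCC topological graph: every pair of crossing edges is independent and
planarly connected. -/
def PCC : Prop := ∀ e f : E, G.Crosses e f → G.Independent e f ∧ G.PlanarlyConnected e f

end TopoGraph
namespace TopoGraph

variable {V E : Type} (G : TopoGraph V E)

/-- The abstract (simple) graph underlying a topological graph. -/
def toSimpleGraph : SimpleGraph V where
  Adj u v := u ≠ v ∧ ∃ e : E, ({G.src e, G.tgt e} : Set V) = {u, v}
  symm := ⟨by
    rintro u v ⟨h, e, he⟩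
    exact ⟨h.symm, e, he.trans (Set.pair_comm u v)⟩⟩
  loopless := ⟨fun u h => h.1 rfl⟩

/-- The plane graph `G'` formed by the crossing-free edges of `G`. -/
def planarSubgraph : SimpleGraph V where
  Adj u v := u ≠ v ∧ ∃ e : E, G.CrossingFree e ∧ ({G.src e, G.tgt e} : Set V) = {u, v}
  symm := ⟨by
    rintro u v ⟨h, e, hf, he⟩
    exact ⟨h.symm, e, hf, he.trans (Set.pair_comm u v)⟩⟩
  loopless := ⟨fun u h => h.1 rfl⟩

/-- The connected component (of the plane graph of crossing-free edges) of a vertex. -/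
def compOf (v : V) : G.planarSubgraph.ConnectedComponent :=
  G.planarSubgraph.connectedComponentMk v

/-- The abstract graph `H` on the connected components of `G'`, where two components are
adjacent iff there is a crossed edge of `G` between them. -/
def componentGraph : SimpleGraph G.planarSubgraph.ConnectedComponent where
  Adj c d := c ≠ d ∧ ∃ e : E, ¬ G.CrossingFree e ∧
    ((G.compOf (G.src e) = c ∧ G.compOf (G.tgt e) = d) ∨
     (G.compOf (G.src e) = d ∧ G.compOf (G.tgt e) = c))
  symm := ⟨by
    rintro c d ⟨h, e, he, hcd⟩
    exact ⟨h.symm, e, he, hcd.symm⟩⟩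
  loopless := ⟨fun c h => h.1 rfl⟩

/-- `E''_{c,d}`: the crossed edges with one endpoint in component `c` and the other
in component `d`. -/
def crossEdges (c d : G.planarSubgraph.ConnectedComponent) : Set E :=
  {e | ¬ G.CrossingFree e ∧
    ((G.compOf (G.src e) = c ∧ G.compOf (G.tgt e) = d) ∨
     (G.compOf (G.src e) = d ∧ G.compOf (G.tgt e) = c))}

/-- `V_{c,d}`: the vertices of component `c` joined by a crossed edge to some vertex of
component `d`. -/
def crossNbrs (c d : G.planarSubgraph.ConnectedComponent) : Set V :=
  {v | G.compOf v = c ∧ ∃ e : E, ¬ G.CrossingFree e ∧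
    ((G.src e = v ∧ G.compOf (G.tgt e) = d) ∨ (G.tgt e = v ∧ G.compOf (G.src e) = d))}

/-- The interior of an arc: the arc without its two endpoints. -/
def arcInterior (e : E) : Set (ℝ × ℝ) :=
  G.arc e '' {t : unitInterval | t ≠ 0 ∧ t ≠ 1}

/-- The point set of the drawing of a subset of the vertices and a subset of the edges. -/
def drawingOf (W : Set V) (S : Set E) : Set (ℝ × ℝ) :=
  (G.pos '' W) ∪ ⋃ e ∈ S, Set.range (G.arc e)

/-- A face of the plane (sub)graph drawn with vertex set `W` and edge set `S`:
a connected component of the complement of the drawing. -/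
def IsFaceOf (W : Set V) (S : Set E) (F : Set (ℝ × ℝ)) : Prop :=
  ∃ x ∈ (G.drawingOf W S)ᶜ, F = connectedComponentIn (G.drawingOf W S)ᶜ x

/-- The vertex set of a connected component of the plane graph `G'`. -/
def compVerts (c : G.planarSubgraph.ConnectedComponent) : Set V :=
  {v | G.compOf v = c}

/-- The crossing-free edges with both endpoints in the component `c` of `G'`. -/
def compEdges (c : G.planarSubgraph.ConnectedComponent) : Set E :=
  {e | G.CrossingFree e ∧ G.compOf (G.src e) = c ∧ G.compOf (G.tgt e) = c}

/-- A face of the plane graph `G'_c` (the component `c` of the plane graph of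
crossing-free edges). -/
def IsCompFace (c : G.planarSubgraph.ConnectedComponent) (F : Set (ℝ × ℝ)) : Prop :=
  G.IsFaceOf (G.compVerts c) (G.compEdges c) F

/-- `E''(F)`: the crossed edges with both endpoints in component `c` that are drawn
inside the face `F`. -/
def faceCrossedEdges (c : G.planarSubgraph.ConnectedComponent) (F : Set (ℝ × ℝ)) : Set E :=
  {e | e ∈ G.crossEdges c c ∧ G.arcInterior e ⊆ F}

/-- The edges on the boundary of a face `F` of the component `c` of `G'`. -/
def BoundaryEdge (c : G.planarSubgraph.ConnectedComponent) (F : Set (ℝ × ℝ)) (e : E) : Prop :=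
  e ∈ G.compEdges c ∧ Set.range (G.arc e) ⊆ closure F

/-- `|F|`: the size of a face `F`, i.e. the length of the shortest closed walk
(in the plane graph of crossing-free edges) visiting every edge on the boundary of `F`. -/
noncomputable def faceSize (c : G.planarSubgraph.ConnectedComponent) (F : Set (ℝ × ℝ)) : ℕ :=
  sInf {n : ℕ | ∃ (u : V) (w : G.planarSubgraph.Walk u u), w.length = n ∧
    ∀ e : E, G.BoundaryEdge c F e → s(G.src e, G.tgt e) ∈ w.edges}

/-- A drawing is 1-plane if every edge is crossed at most once. -/
def OnePlane : Prop :=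
  ∀ e : E, {q : E × (ℝ × ℝ) | q.1 ≠ e ∧ q.2 ∈ Set.range (G.arc e) ∧
    q.2 ∈ Set.range (G.arc q.1) ∧ ∀ v : V, q.2 ≠ G.pos v}.Subsingleton

/-- The number of crossings in a drawing: the number of pairs consisting of an unordered
pair of edges together with a crossing point of the two edges. -/
noncomputable def numCrossings : ℕ :=
  Nat.card {q : Sym2 E × (ℝ × ℝ) // ∃ e f : E, q.1 = s(e, f) ∧ e ≠ f ∧
    q.2 ∈ Set.range (G.arc e) ∧ q.2 ∈ Set.range (G.arc f) ∧ ∀ v : V, q.2 ≠ G.pos v}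

/-- Two crossing edges are `k`-planarly connected if a path of at most `k` crossing-free
edges connects an endpoint of one with an endpoint of the other. -/
def KPlanarlyConnected (k : ℕ) (e f : E) : Prop :=
  ∃ (u v : V), u ∈ G.ends e ∧ v ∈ G.ends f ∧
    ∃ w : G.planarSubgraph.Walk u v, w.length ≤ k

end TopoGraph

/-- An abstract simple graph is 1-planar if it can be drawn as a topological graph in
which every edge is crossed at most once. -/
def IsOnePlanar {V : Type} (H : SimpleGraph V) : Prop :=
  ∃ (E : Type) (D : TopoGraph V E), D.toSimpleGraph = H ∧ D.OnePlane

/-- An abstract simple graph is planar if it can be drawn as a topological graph with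
no crossings. -/
def IsPlanarGraph {V : Type} (H : SimpleGraph V) : Prop :=
  ∃ (E : Type) (D : TopoGraph V E), D.toSimpleGraph = H ∧ ∀ e : E, D.CrossingFree e


namespace PCCaux

variable {n : ℕ}

abbrev Edg (n : ℕ) := {p : Fin n × Fin n // p.1 < p.2}

noncomputable def av (e : Edg n) : ℝ := ((e.1.1 : ℕ) : ℝ)
noncomputable def bv (e : Edg n) : ℝ := ((e.1.2 : ℕ) : ℝ)
noncomputable def ctr (e : Edg n) : ℝ := (av e + bv e) / 2
noncomputable def rad (e : Edg n) : ℝ := (bv e - av e) / 2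
noncomputable def sgn (e : Edg n) : ℝ := if (e.1.1 : ℕ) = 0 then -1 else 1

lemma av_lt_bv (e : Edg n) : av e < bv e := by
  have h : (e.1.1 : ℕ) < (e.1.2 : ℕ) := e.2
  unfold av bv
  exact_mod_cast h

lemma rad_pos (e : Edg n) : 0 < rad e := by
  have := av_lt_bv e; unfold rad; linarith

lemma sgn_sq (e : Edg n) : sgn e ^ 2 = 1 := by unfold sgn; split <;> ring

lemma sgn_ne (e : Edg n) : sgn e ≠ 0 := by unfold sgn; split <;> norm_num

noncomputable def fe (e : Edg n) (t : ℝ) : ℝ × ℝ :=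
  (ctr e + rad e * Real.cos (Real.pi * (1 - t)),
   sgn e * (rad e * Real.sin (Real.pi * (1 - t))))

noncomputable def arcF (e : Edg n) : C(unitInterval, ℝ × ℝ) :=
  ⟨fun t => fe e t, by unfold fe; fun_prop⟩

lemma theta_mem (t : unitInterval) : Real.pi * (1 - (t:ℝ)) ∈ Set.Icc 0 Real.pi := by
  have h0 := t.2.1; have h1 := t.2.2
  constructor
  · exact mul_nonneg Real.pi_pos.le (by linarith)
  · nlinarith [Real.pi_pos]

lemma sin_zero_cases {θ : ℝ} (hθ : θ ∈ Set.Icc 0 Real.pi) (h : Real.sin θ = 0) :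
    θ = 0 ∨ θ = Real.pi := by
  rcases eq_or_lt_of_le hθ.2 with h2 | h2
  · exact Or.inr h2
  · left
    exact (Real.sin_eq_zero_iff_of_lt_of_lt (by linarith [hθ.1, Real.pi_pos]) h2).mp h

lemma range_arc (e : Edg n) {p : ℝ × ℝ} (hp : p ∈ Set.range (arcF e)) :
    (p.1 - ctr e) ^ 2 + p.2 ^ 2 = rad e ^ 2 ∧ 0 ≤ sgn e * p.2 ∧
      (p.2 = 0 → p.1 = av e ∨ p.1 = bv e) := by
  obtain ⟨t, ht⟩ := hp
  set θ := Real.pi * (1 - (t:ℝ)) with hθdef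
  have hθ : θ ∈ Set.Icc 0 Real.pi := theta_mem t
  have h1 : p.1 = ctr e + rad e * Real.cos θ := by rw [← ht]; rfl
  have h2 : p.2 = sgn e * (rad e * Real.sin θ) := by rw [← ht]; rfl
  have hsc := Real.sin_sq_add_cos_sq θ
  have hs2 := sgn_sq e
  refine ⟨?_, ?_, ?_⟩
  · rw [h1, h2]
    linear_combination (rad e) ^ 2 * hsc + (rad e * Real.sin θ) ^ 2 * hs2
  · have hsin : 0 ≤ Real.sin θ := Real.sin_nonneg_of_nonneg_of_le_pi hθ.1 hθ.2
    have heq : sgn e * p.2 = rad e * Real.sin θ := by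
      rw [h2]; linear_combination (rad e * Real.sin θ) * hs2
    rw [heq]
    exact mul_nonneg (rad_pos e).le hsin
  · intro hz
    have hsin : Real.sin θ = 0 := by
      rw [h2] at hz
      rcases mul_eq_zero.mp hz with h | h
      · exact absurd h (sgn_ne e)
      · rcases mul_eq_zero.mp h with h' | h'
        · exact absurd h' (rad_pos e).ne'
        · exact h'
    rcases sin_zero_cases hθ hsin with h | h
    · right; rw [h1, h, Real.cos_zero]; unfold ctr rad; ring
    · left; rw [h1, h, Real.cos_pi]; unfold ctr rad; ring

/-- Two points on two circles centered on the x-axis. -/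
lemma circle_pair {c1 r1 c2 r2 : ℝ} {p q : ℝ × ℝ}
    (hp1 : (p.1 - c1) ^ 2 + p.2 ^ 2 = r1 ^ 2) (hp2 : (p.1 - c2) ^ 2 + p.2 ^ 2 = r2 ^ 2)
    (hq1 : (q.1 - c1) ^ 2 + q.2 ^ 2 = r1 ^ 2) (hq2 : (q.1 - c2) ^ 2 + q.2 ^ 2 = r2 ^ 2) :
    (c1 = c2 ∧ r1 ^ 2 = r2 ^ 2) ∨ (p.1 = q.1 ∧ p.2 ^ 2 = q.2 ^ 2) := by
  rcases eq_or_ne c1 c2 with hc | hc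
  · left; refine ⟨hc, ?_⟩; subst hc; linarith
  · right
    have hp : (c2 - c1) * (2 * p.1 - c1 - c2) = r1 ^ 2 - r2 ^ 2 := by nlinarith
    have hq : (c2 - c1) * (2 * q.1 - c1 - c2) = r1 ^ 2 - r2 ^ 2 := by nlinarith
    have h1 : p.1 = q.1 := by
      have := mul_left_cancel₀ (sub_ne_zero.mpr hc.symm) (hp.trans hq.symm)
      linarith
    refine ⟨h1, ?_⟩
    rw [h1] at hp1
    linarith

lemma edge_eq_of_circle (e f : Edg n) (hc : ctr e = ctr f) (hr : rad e ^ 2 = rad f ^ 2) :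
    e = f := by
  have hre := rad_pos e; have hrf := rad_pos f
  have hr' : rad e = rad f := by nlinarith
  have ha : av e = av f := by unfold ctr at hc; unfold rad at hr'; linarith
  have hb : bv e = bv f := by unfold ctr at hc; unfold rad at hr'; linarith
  unfold av at ha; unfold bv at hb
  have ha' : (e.1.1 : ℕ) = (f.1.1 : ℕ) := by exact_mod_cast ha
  have hb' : (e.1.2 : ℕ) = (f.1.2 : ℕ) := by exact_mod_cast hb
  apply Subtype.ext
  exact Prod.ext (Fin.val_injective ha') (Fin.val_injective hb')

/-- the intersection of the drawings of two distinct edges is a subsingleton. -/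
lemma simple_lemma (e f : Edg n) (hef : e ≠ f) :
    (Set.range (arcF e) ∩ Set.range (arcF f)).Subsingleton := by
  rintro p ⟨hpe, hpf⟩ q ⟨hqe, hqf⟩
  obtain ⟨hp1, hp2, hp3⟩ := range_arc e hpe
  obtain ⟨hp1', hp2', hp3'⟩ := range_arc f hpf
  obtain ⟨hq1, hq2, hq3⟩ := range_arc e hqe
  obtain ⟨hq1', hq2', hq3'⟩ := range_arc f hqf
  rcases circle_pair hp1 hp1' hq1 hq1' with ⟨hc, hr⟩ | ⟨h1, h2⟩
  · exact absurd (edge_eq_of_circle e f hc hr) hef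
  · have h2' : p.2 = q.2 := by
      have hfac : (p.2 - q.2) * (p.2 + q.2) = 0 := by linear_combination h2
      rcases mul_eq_zero.mp hfac with h | h
      · linarith
      · unfold sgn at hp2 hq2 hp2' hq2'
        split_ifs at hp2 hq2 hp2' hq2' <;> linarith
    exact Prod.ext h1 h2'

/-- every intersection point involving an edge from vertex 0 is a vertex position. -/
lemma below_inter (e f : Edg n) (hef : e ≠ f) (he : (e.1.1 : ℕ) = 0) {p : ℝ × ℝ}
    (hpe : p ∈ Set.range (arcF e)) (hpf : p ∈ Set.range (arcF f)) :
    ∃ v : Fin n, p = (((v : ℕ) : ℝ), 0) := by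
  obtain ⟨hp1, hp2, hp3⟩ := range_arc e hpe
  obtain ⟨hp1', hp2', hp3'⟩ := range_arc f hpf
  have hav : av e = 0 := by unfold av; exact_mod_cast he
  rcases eq_or_ne ((f.1.1 : ℕ)) 0 with hf | hf
  · -- both below: apply circle_pair with q = (0,0)
    have hav' : av f = 0 := by unfold av; exact_mod_cast hf
    have hq1 : (((0:ℝ),(0:ℝ)).1 - ctr e) ^ 2 + ((0:ℝ),(0:ℝ)).2 ^ 2 = rad e ^ 2 := by
      unfold ctr rad; rw [hav]; ring
    have hq1' : (((0:ℝ),(0:ℝ)).1 - ctr f) ^ 2 + ((0:ℝ),(0:ℝ)).2 ^ 2 = rad f ^ 2 := by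
      unfold ctr rad; rw [hav']; ring
    rcases circle_pair (q := ((0:ℝ), (0:ℝ))) hp1 hp1' hq1 hq1' with ⟨hc, hr⟩ | ⟨h1, h2⟩
    · exact absurd (edge_eq_of_circle e f hc hr) hef
    · refine ⟨e.1.1, ?_⟩
      have h2' : p.2 = 0 := by
        have : p.2 ^ 2 = 0 := by simpa using h2
        exact pow_eq_zero_iff two_ne_zero |>.mp this
      have h1' : p.1 = 0 := by simpa using h1
      have hcast : ((e.1.1 : ℕ) : ℝ) = 0 := by exact_mod_cast he
      rw [Prod.ext_iff]
      exact ⟨by rw [h1', hcast], h2'⟩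
  · -- mixed: sgn e = -1, sgn f = 1, so p.2 = 0
    have hz : p.2 = 0 := by
      unfold sgn at hp2 hp2'
      rw [if_pos he] at hp2; rw [if_neg hf] at hp2'
      linarith
    rcases hp3 hz with h | h
    · exact ⟨e.1.1, Prod.ext (by simpa [av] using h) hz⟩
    · exact ⟨e.1.2, Prod.ext (by simpa [bv] using h) hz⟩




noncomputable def KG (n : ℕ) : TopoGraph (Fin n) (Edg n) where
  pos v := (((v : ℕ) : ℝ), 0)
  pos_inj := by
    intro u v h
    have h1 : ((u : ℕ) : ℝ) = ((v : ℕ) : ℝ) := congrArg Prod.fst h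
    exact Fin.val_injective (by exact_mod_cast h1)
  src e := e.1.1
  tgt e := e.1.2
  src_ne_tgt e := ne_of_lt e.2
  no_parallel e f h := by
    rcases Set.pair_eq_pair_iff.mp h with ⟨h1, h2⟩ | ⟨h1, h2⟩
    · exact Subtype.ext (Prod.ext h1 h2)
    · have h1' : e.1.1 = f.1.2 := h1
      have h2' : e.1.2 = f.1.1 := h2
      have h3 := e.2
      rw [h1', h2'] at h3
      exact absurd f.2 (asymm h3)
  arc := arcF
  arc_src e := by
    have h : arcF e 0 = fe e ((0 : unitInterval) : ℝ) := rfl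
    rw [h]
    show fe e 0 = _
    unfold fe ctr rad av bv
    norm_num [Real.cos_pi, Real.sin_pi]
    ring
  arc_tgt e := by
    have h : arcF e 1 = fe e ((1 : unitInterval) : ℝ) := rfl
    rw [h]
    show fe e 1 = _
    unfold fe ctr rad av bv
    norm_num [Real.cos_zero, Real.sin_zero]
    ring
  arc_inj e := by
    intro t s h
    have h1 : ctr e + rad e * Real.cos (Real.pi * (1 - (t:ℝ)))
        = ctr e + rad e * Real.cos (Real.pi * (1 - (s:ℝ))) := congrArg Prod.fst h
    have hcos : Real.cos (Real.pi * (1 - (t:ℝ))) = Real.cos (Real.pi * (1 - (s:ℝ))) := by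
      have := (rad_pos e).ne'
      field_simp at h1
      exact mul_left_cancel₀ this (add_left_cancel h1)
    have hθ := Real.injOn_cos (theta_mem t) (theta_mem s) hcos
    have hts : (t : ℝ) = (s : ℝ) := by
      have hπ := Real.pi_ne_zero
      have := mul_left_cancel₀ hπ hθ
      linarith
    exact Subtype.ext hts
  vertex_not_interior e v t h := by
    have h2 : sgn e * (rad e * Real.sin (Real.pi * (1 - (t:ℝ)))) = 0 := congrArg Prod.snd h
    have hsin : Real.sin (Real.pi * (1 - (t:ℝ))) = 0 := by
      rcases mul_eq_zero.mp h2 with h' | h'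
      · exact absurd h' (sgn_ne e)
      · rcases mul_eq_zero.mp h' with h'' | h''
        · exact absurd h'' (rad_pos e).ne'
        · exact h''
    rcases sin_zero_cases (theta_mem t) hsin with h' | h'
    · right
      apply Subtype.ext
      have : (1 : ℝ) - (t : ℝ) = 0 := by
        rcases mul_eq_zero.mp h' with h'' | h''
        · exact absurd h'' Real.pi_ne_zero
        · exact h''
      show (t : ℝ) = 1
      linarith
    · left
      apply Subtype.ext
      have hπ := Real.pi_ne_zero
      have : (1 : ℝ) - (t : ℝ) = 1 := by
        have := mul_left_cancel₀ hπ (h'.trans (mul_one Real.pi).symm)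
        linarith
      show (t : ℝ) = 0
      linarith
  finite_intersections e f h := (simple_lemma e f h).finite

lemma KG_cf (n : ℕ) (g : Edg n) (hg : (g.1.1 : ℕ) = 0) : (KG n).CrossingFree g := by
  intro h hcr
  obtain ⟨hgh, p, hpg, hph, hnv⟩ := hcr
  obtain ⟨v, hv⟩ := below_inter g h hgh hg hpg hph
  exact hnv v hv

end PCCaux

/-- For every `n`, the complete graph `K_n` can be drawn as a simple
topological graph in which every pair of crossing edges is `2`-planarly connected, i.e.
`K_n` is a `2`-PCC graph. -/
theorem completeGraph_two_pcc (n : ℕ) :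
    ∃ (E : Type) (G : TopoGraph (Fin n) E),
      G.toSimpleGraph = (⊤ : SimpleGraph (Fin n)) ∧ G.Simple ∧
      ∀ e f : E, G.Crosses e f → G.KPlanarlyConnected 2 e f := by
  
  classical
  refine ⟨PCCaux.Edg n, PCCaux.KG n, ?_, ?_, ?_⟩
  · ext u v
    show (u ≠ v ∧ _) ↔ _
    simp only [SimpleGraph.top_adj]
    constructor
    · rintro ⟨h, _⟩; exact h
    · intro h
      refine ⟨h, ?_⟩
      rcases lt_or_gt_of_ne h with hlt | hgt
      · exact ⟨⟨(u, v), hlt⟩, rfl⟩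
      · exact ⟨⟨(v, u), hgt⟩, Set.pair_comm _ _⟩
  · intro e f hef
    exact PCCaux.simple_lemma e f hef
  · intro e f hcr
    obtain ⟨hef, p, hpe, hpf, hnv⟩ := hcr
    have he0 : (e.1.1 : ℕ) ≠ 0 := by
      intro h
      obtain ⟨v, hv⟩ := PCCaux.below_inter e f hef h hpe hpf
      exact hnv v hv
    have hf0 : (f.1.1 : ℕ) ≠ 0 := by
      intro h
      obtain ⟨v, hv⟩ := PCCaux.below_inter f e (Ne.symm hef) h hpf hpe
      exact hnv v hv
    have hn : 0 < n := (e.1.1).pos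
    set z : Fin n := ⟨0, hn⟩ with hz
    have adj : ∀ u : Fin n, (u : ℕ) ≠ 0 → (PCCaux.KG n).planarSubgraph.Adj u z := by
      intro u hu
      have hzu : z < u := by
        show (z : ℕ) < (u : ℕ)
        exact Nat.pos_of_ne_zero hu
      refine ⟨?_, ⟨(z, u), hzu⟩, PCCaux.KG_cf n _ rfl, Set.pair_comm _ _⟩
      intro hc
      exact hu (by rw [hc])
    have h1 := adj e.1.1 he0
    have h2 := adj f.1.1 hf0
    exact ⟨e.1.1, f.1.1, Set.mem_insert _ _, Set.mem_insert _ _,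
      SimpleGraph.Walk.cons h1 (SimpleGraph.Walk.cons h2.symm SimpleGraph.Walk.nil),
      by simp⟩
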